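/- arXiv:1104.5435 — 2 statements merged into one kernel-verified Lean document; each statement's English description precedes it below -/
import Mathlib

section
/- Let t be a positive integer and λ a t-core partition. Let V(λ) be the set of t-maximal elements of W(λ) = {λ_i - i + (t+1)/2 : i ≥ 1}. Then the sum of the elements of V(λ) equals 0. -/
/-- Hook length of the cell `c` in the Young diagram `Y`. -/
def YoungDiagram.hook (Y : YoungDiagram) (c : ℕ × ℕ) : ℕ :=
  Y.rowLen c.1 + Y.colLen c.2 - c.1 - c.2 - 1

/-- `Y` is a `t`-core: no hook length is divisible by `t`. -/
def YoungDiagram.IsCore (t : ℕ) (Y : YoungDiagram) : Prop :=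
  ∀ c ∈ Y.cells, ¬ (t ∣ Y.hook c)

/-- The set W(λ) = {λ_i - i + (t+1)/2 : i ≥ 1}, as a set of rationals. -/
def Wset (t : ℕ) (Y : YoungDiagram) : Set ℚ :=
  {x | ∃ i : ℕ, x = (Y.rowLen i : ℚ) - (i + 1) + (t + 1) / 2}

/-- The set of `t`-maximal elements of `X`. -/
def tMax (t : ℕ) (X : Set ℚ) : Set ℚ :=
  {x | x ∈ X ∧ ∀ y ∈ X, (∃ k : ℤ, y - x = (k : ℚ) * t) → y ≤ x}

namespace Stmt2Aux

/-- beta numbers -/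
def a (Y : YoungDiagram) (i : ℕ) : ℤ := (Y.rowLen i : ℤ) - (i + 1)

lemma a_strictAnti (Y : YoungDiagram) : StrictAnti (a Y) := by
  apply strictAnti_nat_of_succ_lt
  intro i
  have := Y.rowLen_anti i (i + 1) (Nat.le_succ i)
  unfold a
  push_cast
  omega

lemma a_le (Y : YoungDiagram) {i j : ℕ} (h : i ≤ j) : a Y j ≤ a Y i :=
  (a_strictAnti Y).antitone h

lemma a_inj (Y : YoungDiagram) : Function.Injective (a Y) :=
  (a_strictAnti Y).injective

lemma a_step (Y : YoungDiagram) (i k : ℕ) : a Y (i + k) ≤ a Y i - k := by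
  induction k with
  | zero => simp
  | succ n ih =>
    have := (a_strictAnti Y) (Nat.lt_succ_self (i + n))
    push_cast
    push_cast at ih
    have h2 : a Y (i + (n+1)) < a Y (i + n) := by
      have : i + n < i + (n+1) := by omega
      exact (a_strictAnti Y) this
    omega

lemma a_lb (Y : YoungDiagram) (i : ℕ) : -(i + 1 : ℤ) ≤ a Y i := by
  unfold a
  have : (0 : ℤ) ≤ (Y.rowLen i : ℤ) := Int.natCast_nonneg _
  omega

lemma a_tail (Y : YoungDiagram) {i : ℕ} (h : Y.colLen 0 ≤ i) : a Y i = -(i + 1 : ℤ) := by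
  have h0 : (i, 0) ∉ Y := by
    rw [YoungDiagram.mem_iff_lt_colLen]
    omega
  rw [YoungDiagram.mem_iff_lt_rowLen] at h0
  have : Y.rowLen i = 0 := by omega
  unfold a
  rw [this]
  push_cast
  ring

/-- closure of the beta set under subtracting t, for a t-core -/
lemma closure (Y : YoungDiagram) (t : ℕ) (ht : 0 < t) (hY : Y.IsCore t) (i : ℕ) :
    ∃ j, a Y j = a Y i - t := by
  by_contra hc
  push_neg at hc
  set v := a Y i - t with hv
  have hit : a Y (i + t) < v := by
    have h1 := a_step Y i t
    have h2 := hc (i + t)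
    omega
  have hex : ∃ j, a Y j < v := ⟨i + t, hit⟩
  set j0 := Nat.find hex with hj0def
  have hj0lt : a Y j0 < v := Nat.find_spec hex
  have hj0pos : i < j0 := by
    by_contra h
    push_neg at h
    have := a_le Y h
    omega
  have hj0le : j0 ≤ i + t := Nat.find_le hit
  set j' := j0 - 1 with hj'def
  have hj'1 : j0 = j' + 1 := by omega
  have hj' : v + 1 ≤ a Y j' := by
    have h1 : ¬ a Y j' < v := Nat.find_min hex (by omega)
    have h2 := hc j'
    omega
  have hij' : i ≤ j' := by omega
  have hm0 : (0 : ℤ) ≤ v + j0 := by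
    have := a_lb Y j0
    omega
  set M := (v + j0).toNat with hMdef
  have hMz : (M : ℤ) = v + j0 := Int.toNat_of_nonneg hm0
  have hrow0 : (Y.rowLen j0 : ℤ) = a Y j0 + j0 + 1 := by unfold a; push_cast; ring
  have hrow' : (Y.rowLen j' : ℤ) = a Y j' + j' + 1 := by unfold a; push_cast; ring
  have hrowi : (Y.rowLen i : ℤ) = a Y i + i + 1 := by unfold a; push_cast; ring
  have h1 : Y.rowLen j0 ≤ M := by omega
  have h2 : M < Y.rowLen j' := by omega
  have hcol : Y.colLen M = j0 := by
    have hu : (j0, M) ∉ Y := by rw [YoungDiagram.mem_iff_lt_rowLen]; omega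
    have hl : (j', M) ∈ Y := by rw [YoungDiagram.mem_iff_lt_rowLen]; omega
    rw [YoungDiagram.mem_iff_lt_colLen] at hu hl
    omega
  have hcell : (i, M) ∈ Y := by
    rw [YoungDiagram.mem_iff_lt_rowLen]
    omega
  have hhook : Y.hook (i, M) = t := by
    unfold YoungDiagram.hook
    simp only [hcol]
    omega
  exact hY (i, M) ((YoungDiagram.mem_cells _).mpr hcell) (hhook ▸ dvd_refl t)

end Stmt2Aux

namespace Stmt2Aux

lemma ex_res (Y : YoungDiagram) (t : ℕ) (ht : 0 < t) (r : ℕ) (hr : r < t) :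
    ∃ i : ℕ, a Y i % t = r ∧ -((t : ℤ) * (Y.colLen 0 + 2)) ≤ a Y i := by
  set L := Y.colLen 0 with hLdef
  obtain ⟨u, hu⟩ : ∃ u : ℕ, (u : ℤ) = (t : ℤ) * ((L : ℤ) + 1) := ⟨t * (L + 1), by push_cast; ring⟩
  have huL : (L : ℤ) + 1 ≤ (u : ℤ) := by
    rw [hu]
    have h1 : (1 : ℤ) ≤ (t : ℤ) := by exact_mod_cast ht
    nlinarith [Int.natCast_nonneg L]
  refine ⟨u + (t - r - 1), ?_, ?_⟩
  · have hL2 : L ≤ u + (t - r - 1) := by omega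
    rw [a_tail Y hL2]
    have expand : (t : ℤ) * (-((L : ℤ) + 2)) = -(u : ℤ) - t := by rw [hu]; ring
    have e : (-(↑(u + (t - r - 1)) + 1) : ℤ) = (r : ℤ) + (t : ℤ) * (-((L : ℤ) + 2)) := by
      rw [expand]; omega
    rw [e, Int.add_mul_emod_self_left]
    exact Int.emod_eq_of_lt (by positivity) (by exact_mod_cast hr)
  · have hL2 : L ≤ u + (t - r - 1) := by omega
    rw [a_tail Y hL2]
    have expand : (t : ℤ) * ((L : ℤ) + 2) = (u : ℤ) + t := by rw [hu]; ring
    omega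

end Stmt2Aux


section
open Stmt2Aux Finset

/-- the t-maximal elements of W(λ) sum to 0 for a t-core λ. -/
theorem stmt_2 (t : ℕ) (ht : 0 < t) (Y : YoungDiagram) (hY : Y.IsCore t)
    (S : Finset ℚ) (hS : (S : Set ℚ) = tMax t (Wset t Y)) :
    ∑ x ∈ S, x = 0 := by
  classical
  have htZ : (0 : ℤ) < (t : ℤ) := by exact_mod_cast ht
  set L := Y.colLen 0 with hLdef
  -- the minimal index attaining each residue
  have hgex : ∀ r : ℕ, r < t → ∃ i : ℕ, a Y i % t = (r : ℤ) ∧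
      ∀ i' < i, a Y i' % t ≠ (r : ℤ) := by
    intro r hr
    have ex : ∃ i, a Y i % t = (r : ℤ) := by
      obtain ⟨i, hi, _⟩ := ex_res Y t ht r hr
      exact ⟨i, hi⟩
    exact ⟨Nat.find ex, Nat.find_spec ex, fun i' hi' => Nat.find_min ex hi'⟩
  choose! g hg1 hg2 using hgex
  set m : ℕ → ℤ := fun r => a Y (g r) with hm
  -- maximality of m r in its residue class
  have hmax : ∀ r, r < t → ∀ i, a Y i % t = (r : ℤ) → a Y i ≤ m r := by
    intro r hr i hi
    rcases lt_or_ge i (g r) with h | h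
    · exact absurd hi (hg2 r hr i h)
    · exact a_le Y h
  -- lower bound on m r
  have hml : ∀ r, r < t → -((t : ℤ) * ((L : ℤ) + 2)) ≤ m r := by
    intro r hr
    obtain ⟨i, hi, hbd⟩ := ex_res Y t ht r hr
    exact le_trans hbd (hmax r hr i hi)
  -- residue decomposition of m r
  have hq : ∀ r, r < t → ∃ qq : ℤ, m r = (r : ℤ) + (t : ℤ) * qq := by
    intro r hr
    have h1 : (r : ℤ) % t = m r % t := by
      rw [hg1 r hr]
      exact Int.emod_eq_of_lt (by positivity) (by exact_mod_cast hr)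
    have h2 : (t : ℤ) ∣ m r - (r : ℤ) := Int.ModEq.dvd h1
    obtain ⟨qq, hqq⟩ := h2
    exact ⟨qq, by linarith⟩
  choose! q hqe using hq
  -- all smaller members of the class are attained
  have hiter : ∀ r, r < t → ∀ k : ℕ, ∃ j, a Y j = m r - t * k := by
    intro r hr k
    induction k with
    | zero => exact ⟨g r, by simp [hm]⟩
    | succ n ih =>
      obtain ⟨j, hj⟩ := ih
      obtain ⟨j', hj'⟩ := closure Y t ht hY j
      refine ⟨j', ?_⟩
      rw [hj', hj]
      push_cast
      ring
  have hall : ∀ r, r < t → ∀ x : ℤ, x % t = (r : ℤ) → x ≤ m r → ∃ j, a Y j = x := by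
    intro r hr x hx hxm
    have hmod : x % t = m r % t := by rw [hx, hg1 r hr]
    have hdvd : (t : ℤ) ∣ m r - x := Int.ModEq.dvd hmod
    obtain ⟨c, hc⟩ := hdvd
    have hc0 : 0 ≤ c := by
      by_contra h
      push_neg at h
      have h1 : c ≤ -1 := by omega
      have h2 : (t : ℤ) * c ≤ (t : ℤ) * (-1) := by
        apply mul_le_mul_of_nonneg_left h1 (le_of_lt htZ)
      linarith
    obtain ⟨j, hj⟩ := hiter r hr c.toNat
    refine ⟨j, ?_⟩
    rw [hj, Int.toNat_of_nonneg hc0]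
    linarith
  -- the big cutoff
  set NqZ : ℤ := (L : ℤ) + t + 3 with hNqZ
  obtain ⟨N, hNZ⟩ : ∃ N : ℕ, (N : ℤ) = (t : ℤ) * NqZ :=
    ⟨t * (L + t + 3), by push_cast [hNqZ]; ring⟩
  have hNL : L + 1 ≤ N := by
    have h1 : (1 : ℤ) ≤ (t : ℤ) := htZ
    have : ((L : ℤ) + t + 3) ≤ (t : ℤ) * NqZ := by
      rw [hNqZ]; nlinarith [Int.natCast_nonneg L]
    have h2 : ((L : ℤ) + t + 3) ≤ (N : ℤ) := by rw [hNZ]; exact this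
    omega
  have hmN : ∀ r, r < t → 0 ≤ m r + N := by
    intro r hr
    have h1 := hml r hr
    have h2 : (t : ℤ) * ((L : ℤ) + 2) ≤ (t : ℤ) * NqZ := by
      rw [hNqZ]
      apply mul_le_mul_of_nonneg_left (by omega) (le_of_lt htZ)
    rw [hNZ]
    linarith
  -- K r
  have hKpos : ∀ r, r < t → 0 ≤ q r + NqZ + 1 := by
    intro r hr
    have h1 : (t : ℤ) * (q r + NqZ) = m r - r + N := by
      linear_combination (-1 : ℤ) * hqe r hr - hNZ
    have h2 : m r - r + N > -(t : ℤ) := by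
      have := hmN r hr
      have : (r : ℤ) < t := by exact_mod_cast hr
      omega
    by_contra h
    push_neg at h
    have h3 : q r + NqZ ≤ -1 := by omega
    have h4 : (t : ℤ) * (q r + NqZ) ≤ (t : ℤ) * (-1) :=
      mul_le_mul_of_nonneg_left h3 (le_of_lt htZ)
    omega
  set K : ℕ → ℕ := fun r => (q r + NqZ + 1).toNat with hKdef
  have hK : ∀ r, r < t → (K r : ℤ) = q r + NqZ + 1 := by
    intro r hr
    simp only [hKdef]
    exact Int.toNat_of_nonneg (hKpos r hr)
  -- counting each fiber
  have hcard : ∀ r, r < t →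
      ((Finset.range N).filter fun i => a Y i % t = (r : ℤ)).card = K r := by
    intro r hr
    have himg : ((Finset.range N).filter fun i => a Y i % t = (r : ℤ)).image (a Y)
        = (Finset.range (K r)).image (fun k : ℕ => m r - t * k) := by
      ext x
      simp only [Finset.mem_image, Finset.mem_filter, Finset.mem_range]
      constructor
      · rintro ⟨i, ⟨hiN, hir⟩, rfl⟩
        have hle : a Y i ≤ m r := hmax r hr i hir
        have hlb : -(N : ℤ) ≤ a Y i := by
          have h1 := a_le Y (show i ≤ N - 1 by omega)
          rw [a_tail Y (show L ≤ N - 1 by omega)] at h1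
          omega
        have hdvd : (t : ℤ) ∣ m r - a Y i :=
          Int.ModEq.dvd (show a Y i % t = m r % t by rw [hir, hg1 r hr])
        obtain ⟨c, hc⟩ := hdvd
        have hc0 : 0 ≤ c := by
          by_contra h
          push_neg at h
          have h1 : c ≤ -1 := by omega
          have h2 : (t : ℤ) * c ≤ (t : ℤ) * (-1) :=
            mul_le_mul_of_nonneg_left h1 (le_of_lt htZ)
          linarith
        refine ⟨c.toNat, ?_, ?_⟩
        · have hck : (c.toNat : ℤ) = c := Int.toNat_of_nonneg hc0
          have e1 : (t : ℤ) * (q r + NqZ + 1) = m r - r + N + t := by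
            linear_combination (-1 : ℤ) * hqe r hr - hNZ
          have h1 : (t : ℤ) * c < (t : ℤ) * (q r + NqZ + 1) := by
            have hrt : (0 : ℤ) ≤ (r : ℤ) := Int.natCast_nonneg r
            omega
          have h2 : c < q r + NqZ + 1 := lt_of_mul_lt_mul_left h1 (le_of_lt htZ)
          have hKr := hK r hr
          omega
        · have hck : (c.toNat : ℤ) = c := Int.toNat_of_nonneg hc0
          rw [hck]
          linarith
      · rintro ⟨k, hk, rfl⟩
        have hxr : (m r - t * k) % t = (r : ℤ) := by
          have e : m r - (t : ℤ) * k = (r : ℤ) + (t : ℤ) * (q r - k) := by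
            linear_combination hqe r hr
          rw [e, Int.add_mul_emod_self_left]
          exact Int.emod_eq_of_lt (by positivity) (by exact_mod_cast hr)
        have hxm : m r - t * k ≤ m r := by
          have : (0 : ℤ) ≤ (t : ℤ) * k := by positivity
          linarith
        obtain ⟨j, hj⟩ := hall r hr _ hxr hxm
        refine ⟨j, ⟨?_, by rw [hj]; exact hxr⟩, hj⟩
        -- j < N
        have hkK : (k : ℤ) ≤ q r + NqZ := by
          have := hK r hr
          have : (k : ℤ) < (K r : ℤ) := by exact_mod_cast hk
          omega
        have h1 : (t : ℤ) * k ≤ (t : ℤ) * (q r + NqZ) :=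
          mul_le_mul_of_nonneg_left hkK (le_of_lt htZ)
        have e1 : (t : ℤ) * (q r + NqZ) = m r - r + N := by
          linear_combination (-1 : ℤ) * hqe r hr - hNZ
        have hxlb : -(N : ℤ) ≤ m r - t * k := by
          have hrt : (0 : ℤ) ≤ (r : ℤ) := Int.natCast_nonneg r
          omega
        by_contra hjN
        push_neg at hjN
        have h2 : a Y j < a Y (N - 1) := a_strictAnti Y (by omega)
        rw [a_tail Y (show L ≤ N - 1 by omega)] at h2
        rw [hj] at h2
        omega
    have h1 : ((Finset.range N).filter fun i => a Y i % t = (r : ℤ)).card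
        = (((Finset.range N).filter fun i => a Y i % t = (r : ℤ)).image (a Y)).card :=
      (Finset.card_image_of_injOn (Function.Injective.injOn (a_inj Y))).symm
    have hinj2 : Function.Injective (fun k : ℕ => m r - (t : ℤ) * k) := by
      intro k1 k2 h
      simp only at h
      have : (t : ℤ) * k1 = (t : ℤ) * k2 := by linarith
      have := mul_left_cancel₀ (ne_of_gt htZ) this
      exact_mod_cast this
    rw [h1, himg, Finset.card_image_of_injective _ hinj2, Finset.card_range]
  -- partition of range N into fibers
  have hNsum : N = ∑ r ∈ Finset.range t, K r := by
    have hfib := Finset.card_eq_sum_card_fiberwise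
      (f := fun i => (a Y i % t).toNat) (s := Finset.range N) (t := Finset.range t) ?_
    · rw [Finset.card_range] at hfib
      rw [hfib]
      apply Finset.sum_congr rfl
      intro r hr
      rw [Finset.mem_range] at hr
      rw [← hcard r hr]
      congr 1
      apply Finset.filter_congr
      intro i _
      have h0 : 0 ≤ a Y i % t := Int.emod_nonneg _ (ne_of_gt htZ)
      show (a Y i % t).toNat = r ↔ a Y i % t = (r : ℤ)
      omega
    · intro i _
      rw [Finset.mem_coe, Finset.mem_range]
      have h0 : 0 ≤ a Y i % t := Int.emod_nonneg _ (ne_of_gt htZ)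
      have h1 : a Y i % t < t := Int.emod_lt_of_pos _ htZ
      show (a Y i % t).toNat < t
      omega
  -- sum of the q's
  have hsumq : ∑ r ∈ Finset.range t, q r = -(t : ℤ) := by
    have h1 : (N : ℤ) = ∑ r ∈ Finset.range t, (K r : ℤ) := by
      rw [hNsum]; push_cast; ring
    have h2 : ∑ r ∈ Finset.range t, (K r : ℤ) = ∑ r ∈ Finset.range t, (q r + NqZ + 1) :=
      Finset.sum_congr rfl (fun r hr => hK r (Finset.mem_range.mp hr))
    have h3 : ∑ r ∈ Finset.range t, (q r + NqZ + 1)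
        = (∑ r ∈ Finset.range t, q r) + (t : ℤ) * NqZ + t := by
      rw [Finset.sum_add_distrib, Finset.sum_add_distrib, Finset.sum_const,
        Finset.sum_const, Finset.card_range]
      push_cast
      ring
    rw [hNZ, h2, h3] at h1
    linarith
  -- sum of the maxima
  have hsumm : ∑ r ∈ Finset.range t, m r
      = (∑ r ∈ Finset.range t, (r : ℤ)) + (t : ℤ) * (-(t : ℤ)) := by
    have h1 : ∑ r ∈ Finset.range t, m r
        = ∑ r ∈ Finset.range t, ((r : ℤ) + (t : ℤ) * q r) :=
      Finset.sum_congr rfl (fun r hr => hqe r (Finset.mem_range.mp hr))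
    rw [h1, Finset.sum_add_distrib, ← Finset.mul_sum, hsumq]
  have hgauss : (∑ r ∈ Finset.range t, (r : ℤ)) * 2 = (t : ℤ) * ((t : ℤ) - 1) := by
    have h := Finset.sum_range_id_mul_two t
    have h2 := congrArg (Nat.cast : ℕ → ℤ) h
    push_cast at h2
    rw [h2]
    have : ((t - 1 : ℕ) : ℤ) = (t : ℤ) - 1 := by omega
    rw [this]
  -- identify S
  set c : ℚ := ((t : ℚ) + 1) / 2 with hc
  have hW : Wset t Y = {x : ℚ | ∃ i : ℕ, x = ((a Y i : ℤ) : ℚ) + c} := by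
    unfold Wset
    ext x
    simp only [Set.mem_setOf_eq]
    apply exists_congr
    intro i
    constructor
    · intro h; rw [h, hc]; unfold a; push_cast; ring
    · intro h; rw [h, hc]; unfold a; push_cast; ring
  set T : Finset ℚ := (Finset.range t).image (fun r => ((m r : ℚ) + c)) with hT
  have hco : (T : Set ℚ) = tMax t (Wset t Y) := by
    ext x
    simp only [hT, Finset.coe_image, Finset.coe_range, Set.mem_image, Set.mem_Iio]
    constructor
    · rintro ⟨r, hr, rfl⟩
      constructor
      · rw [hW]; exact ⟨g r, by simp [hm]⟩
      · rintro y hy ⟨k, hk⟩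
        rw [hW] at hy
        obtain ⟨i, rfl⟩ := hy
        have hz : a Y i - m r = k * t := by
          have : ((a Y i : ℤ) : ℚ) - ((m r : ℤ) : ℚ) = (k : ℚ) * (t : ℚ) := by
            push_cast at hk ⊢
            linarith
          exact_mod_cast this
        have hres : a Y i % t = (r : ℤ) := by
          have e : a Y i = (r : ℤ) + (t : ℤ) * (q r + k) := by
            linear_combination hz + hqe r hr
          rw [e, Int.add_mul_emod_self_left]
          exact Int.emod_eq_of_lt (by positivity) (by exact_mod_cast hr)
        have h1 := hmax r hr i hres
        have h2 : ((a Y i : ℤ) : ℚ) ≤ ((m r : ℤ) : ℚ) := by exact_mod_cast h1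
        linarith
    · rintro ⟨hx, hmaxx⟩
      rw [hW] at hx
      obtain ⟨i, rfl⟩ := hx
      have h0 : 0 ≤ a Y i % t := Int.emod_nonneg _ (ne_of_gt htZ)
      have h1 : a Y i % t < t := Int.emod_lt_of_pos _ htZ
      set r : ℕ := (a Y i % t).toNat with hr0
      have hrt : r < t := by omega
      have hres : a Y i % t = (r : ℤ) := by simp only [hr0]; omega
      have hle : a Y i ≤ m r := hmax r hrt i hres
      have hdvd : (t : ℤ) ∣ m r - a Y i :=
        Int.ModEq.dvd (show a Y i % t = m r % t by rw [hres, hg1 r hrt])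
      obtain ⟨kk, hkk⟩ := hdvd
      have happ := hmaxx (((m r : ℤ) : ℚ) + c) (by rw [hW]; exact ⟨g r, by simp [hm]⟩)
        ⟨kk, by
          have : ((m r : ℤ) : ℚ) - ((a Y i : ℤ) : ℚ) = (kk : ℚ) * (t : ℚ) := by
            exact_mod_cast (by linarith : m r - a Y i = kk * t)
          linarith⟩
      have h2 : ((m r : ℤ) : ℚ) ≤ ((a Y i : ℤ) : ℚ) := by linarith
      have h3 : m r ≤ a Y i := by exact_mod_cast h2
      have h4 : m r = a Y i := le_antisymm h3 hle
      exact ⟨r, hrt, by rw [h4]⟩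
  have hST : S = T := Finset.coe_injective (by rw [hS, hco])
  rw [hST, hT]
  rw [Finset.sum_image ?hinj]
  case hinj =>
    intro r1 hr1 r2 hr2 h
    rw [Finset.mem_coe, Finset.mem_range] at hr1 hr2
    have : ((m r1 : ℤ) : ℚ) = ((m r2 : ℤ) : ℚ) := by linarith
    have hmm : m r1 = m r2 := by exact_mod_cast this
    have e1 : (r1 : ℤ) = (r2 : ℤ) := by
      have a1 := hg1 r1 hr1
      have a2 := hg1 r2 hr2
      rw [← a1, ← a2]
      show m r1 % (t : ℤ) = m r2 % (t : ℤ)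
      rw [hmm]
    exact_mod_cast e1
  -- final computation
  rw [Finset.sum_add_distrib, Finset.sum_const, Finset.card_range, nsmul_eq_mul]
  have hcast : ∑ r ∈ Finset.range t, ((m r : ℤ) : ℚ) = ((∑ r ∈ Finset.range t, m r : ℤ) : ℚ) := by
    push_cast
    ring
  rw [hcast, hsumm]
  have hgQ := congrArg (Int.cast : ℤ → ℚ) hgauss
  push_cast at hgQ
  push_cast
  rw [hc]
  linarith

end
end

section
/- Let t be a positive integer and λ a t-core partition with V-coding v_0 > v_1 > ⋯ > v_{t-1} (the t-maximal elements of W(λ) = {λ_i - i + (t+1)/2 : i ≥ 1} sorted decreasingly). Then |λ| = (v_0² + v_1² + ⋯ + v_{t-1}²)/(2t) − (t² − 1)/24. -/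
namespace CoreAux

/-- The β-number of row `i`. -/
def bInt (Y : YoungDiagram) (i : ℕ) : ℤ := (Y.rowLen i : ℤ) - i - 1

lemma rowLen_eq_zero_iff (Y : YoungDiagram) (i : ℕ) :
    Y.rowLen i = 0 ↔ Y.colLen 0 ≤ i := by
  have h1 : (i, 0) ∈ Y ↔ 0 < Y.rowLen i := YoungDiagram.mem_iff_lt_rowLen
  have h2 : (i, 0) ∈ Y ↔ i < Y.colLen 0 := YoungDiagram.mem_iff_lt_colLen
  have := h1.symm.trans h2
  omega

lemma bInt_strictAnti (Y : YoungDiagram) : StrictAnti (bInt Y) := by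
  apply strictAnti_nat_of_succ_lt
  intro n
  have := Y.rowLen_anti n (n+1) (by omega)
  unfold bInt; push_cast; omega

lemma bInt_eq_of_le (Y : YoungDiagram) (i : ℕ) (h : Y.colLen 0 ≤ i) :
    bInt Y i = -(i : ℤ) - 1 := by
  have := (rowLen_eq_zero_iff Y i).mpr h
  unfold bInt; omega

/-- positions of the "beads gaps". -/
def gInt (Y : YoungDiagram) (j : ℕ) : ℤ := (j : ℤ) - Y.colLen j

lemma gInt_strictMono (Y : YoungDiagram) : StrictMono (gInt Y) := by
  apply strictMono_nat_of_lt_succ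
  intro n
  have := Y.colLen_anti n (n+1) (by omega)
  unfold gInt; push_cast; omega

lemma bInt_ne_gInt (Y : YoungDiagram) (k j : ℕ) : bInt Y k ≠ gInt Y j := by
  unfold bInt gInt
  by_cases h : k < Y.colLen j
  · have : (k, j) ∈ Y := YoungDiagram.mem_iff_lt_colLen.mpr h
    have hj : j < Y.rowLen k := YoungDiagram.mem_iff_lt_rowLen.mp this
    push_cast; omega
  · have : (k, j) ∉ Y := fun hm => h (YoungDiagram.mem_iff_lt_colLen.mp hm)
    have hj : ¬ j < Y.rowLen k := fun hm => this (YoungDiagram.mem_iff_lt_rowLen.mpr hm)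
    push_cast; omega

lemma exists_gInt (Y : YoungDiagram) (m : ℤ) (hm : -(Y.colLen 0 : ℤ) ≤ m)
    (h : ∀ k, bInt Y k ≠ m) : ∃ j, gInt Y j = m := by
  have hex : ∃ j : ℕ, m < gInt Y j := by
    refine ⟨(m + Y.colLen 0).toNat + 1, ?_⟩
    have h1 : (Y.colLen ((m + Y.colLen 0).toNat + 1) : ℤ) ≤ (Y.colLen 0 : ℤ) := by
      exact_mod_cast Y.colLen_anti 0 _ (by omega)
    have h2 : (((m + Y.colLen 0).toNat : ℤ)) = m + Y.colLen 0 :=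
      Int.toNat_of_nonneg (by omega)
    unfold gInt; push_cast; omega
  classical
  have hj1 : m < gInt Y (Nat.find hex) := Nat.find_spec hex
  have h0 : ¬ m < gInt Y 0 := by unfold gInt; push_cast; omega
  have hj1pos : Nat.find hex ≠ 0 := by
    intro h'; rw [h'] at hj1; exact h0 hj1
  obtain ⟨j, hjeq⟩ : ∃ j, Nat.find hex = j + 1 := ⟨Nat.find hex - 1, by omega⟩
  rw [hjeq] at hj1
  have hle : ¬ m < gInt Y j := Nat.find_min hex (by omega)
  rcases eq_or_lt_of_le (not_lt.mp hle) with heq | hlt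
  · exact ⟨j, heq⟩
  · exfalso
    have h2 : m < (j : ℤ) + 1 - Y.colLen (j+1) := by
      have := hj1; unfold gInt at this; push_cast at this; exact_mod_cast this
    have h3 : (j : ℤ) - Y.colLen j < m := by
      have := hlt; unfold gInt at this; omega
    set K := ((j : ℤ) - m).toNat with hKdef
    have hK1 : (K : ℤ) = (j : ℤ) - m := Int.toNat_of_nonneg (by omega)
    have hKlt : K < Y.colLen j := by omega
    have hKge : (Y.colLen (j+1) : ℤ) ≤ K := by omega
    have hmem : (K, j) ∈ Y := YoungDiagram.mem_iff_lt_colLen.mpr hKlt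
    have hrow1 : j < Y.rowLen K := YoungDiagram.mem_iff_lt_rowLen.mp hmem
    have hnmem : (K, j+1) ∉ Y := by
      intro hm'
      have := YoungDiagram.mem_iff_lt_colLen.mp hm'
      omega
    have hrow2 : ¬ (j + 1) < Y.rowLen K := fun hm' =>
      hnmem (YoungDiagram.mem_iff_lt_rowLen.mpr hm')
    have : bInt Y K = m := by unfold bInt; omega
    exact h K this

lemma closure (t : ℕ) (ht : 0 < t) (Y : YoungDiagram) (hY : Y.IsCore t) (i : ℕ) :
    ∃ k, bInt Y k = bInt Y i - t := by
  by_contra hcon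
  push_neg at hcon
  set m := bInt Y i - t with hmdef
  have hm : -(Y.colLen 0 : ℤ) ≤ m := by
    by_contra h'
    push_neg at h'
    set k := (-m - 1).toNat with hkdef
    have hk1 : (k : ℤ) = -m - 1 := Int.toNat_of_nonneg (by omega)
    have hk2 : Y.colLen 0 ≤ k := by omega
    have := bInt_eq_of_le Y k hk2
    exact hcon k (by omega)
  obtain ⟨j, hj⟩ := exists_gInt Y m hm hcon
  unfold gInt at hj
  have hbi : 0 < bInt Y i - m := by omega
  have hcl : i < Y.colLen j := by
    by_contra h'
    push_neg at h'
    have hnm : (i, j) ∉ Y := by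
      intro hm'
      have := YoungDiagram.mem_iff_lt_colLen.mp hm'
      omega
    have hr : ¬ j < Y.rowLen i := fun hm' => hnm (YoungDiagram.mem_iff_lt_rowLen.mpr hm')
    unfold bInt at hbi; omega
  have hmem : (i, j) ∈ Y := YoungDiagram.mem_iff_lt_colLen.mpr hcl
  have hrow : j < Y.rowLen i := YoungDiagram.mem_iff_lt_rowLen.mp hmem
  have hhook : Y.hook (i, j) = t := by
    unfold YoungDiagram.hook
    simp only
    unfold bInt at hbi hmdef
    omega
  exact hY (i, j) ((YoungDiagram.mem_cells _).mpr hmem) (hhook ▸ dvd_refl t)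

lemma card_eq_sum_rowLen (Y : YoungDiagram) (n : ℕ) (hn : Y.colLen 0 ≤ n) :
    Y.card = ∑ i ∈ Finset.range n, Y.rowLen i := by
  have hcells : Y.cells = (Finset.range n).biUnion (fun i => Y.row i) := by
    ext c
    simp only [Finset.mem_biUnion, Finset.mem_range, YoungDiagram.mem_row_iff]
    constructor
    · intro hc
      refine ⟨c.1, ?_, (YoungDiagram.mem_cells c).mp hc, rfl⟩
      have h1 : (c.1, 0) ∈ Y := Y.up_left_mem le_rfl (Nat.zero_le _)
        (by rw [YoungDiagram.mem_cells] at hc; exact hc)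
      have := YoungDiagram.mem_iff_lt_colLen.mp h1
      omega
    · rintro ⟨i, _, hc, _⟩
      exact (YoungDiagram.mem_cells c).mpr hc
  rw [YoungDiagram.card, hcells, Finset.card_biUnion]
  · exact Finset.sum_congr rfl fun i _ => (Y.rowLen_eq_card (i := i)).symm
  · intro x _ y _ hxy
    simp only [Finset.disjoint_left, YoungDiagram.mem_row_iff]
    rintro a ⟨_, h1⟩ ⟨_, h2⟩
    exact hxy (h1 ▸ h2 ▸ rfl)

lemma sum_range_cast (K : ℕ) : ∑ k ∈ Finset.range K, (k : ℚ) = K * (K - 1) / 2 := by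
  induction K with
  | zero => simp
  | succ n ih => rw [Finset.sum_range_succ, ih]; push_cast; ring

lemma sum_range_sq_cast (K : ℕ) :
    ∑ k ∈ Finset.range K, (k : ℚ) ^ 2 = K * (K - 1) * (2 * K - 1) / 6 := by
  induction K with
  | zero => simp
  | succ n ih => rw [Finset.sum_range_succ, ih]; push_cast; ring

end CoreAux
namespace CoreAux

/-- The W-values as a function of the row index. -/
def bq (t : ℕ) (Y : YoungDiagram) (i : ℕ) : ℚ :=
  ((bInt Y i : ℤ) : ℚ) + ((t : ℚ) + 1) / 2

lemma mem_Wset_iff (t : ℕ) (Y : YoungDiagram) (x : ℚ) :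
    x ∈ Wset t Y ↔ ∃ i, x = bq t Y i := by
  unfold Wset bq bInt
  constructor
  · rintro ⟨i, rfl⟩; exact ⟨i, by push_cast; ring⟩
  · rintro ⟨i, rfl⟩; exact ⟨i, by push_cast; ring⟩

lemma bq_strictAnti (t : ℕ) (Y : YoungDiagram) : StrictAnti (bq t Y) := by
  intro i j h
  unfold bq
  have := bInt_strictAnti Y h
  have : ((bInt Y j : ℤ) : ℚ) < ((bInt Y i : ℤ) : ℚ) := by exact_mod_cast this
  linarith

lemma bq_eq_of_le (t : ℕ) (Y : YoungDiagram) (i : ℕ) (h : Y.colLen 0 ≤ i) :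
    bq t Y i = ((t : ℚ) + 1) / 2 - 1 - i := by
  unfold bq
  rw [bInt_eq_of_le Y i h]
  push_cast; ring

lemma le_bq (t : ℕ) (Y : YoungDiagram) (i : ℕ) :
    ((t : ℚ) + 1) / 2 - 1 - i ≤ bq t Y i := by
  unfold bq bInt
  have : (0:ℚ) ≤ (Y.rowLen i : ℚ) := by positivity
  push_cast
  linarith

lemma Wset_sub_mem (t : ℕ) (ht : 0 < t) (Y : YoungDiagram) (hY : Y.IsCore t) (x : ℚ)
    (hx : x ∈ Wset t Y) : x - t ∈ Wset t Y := by
  rw [mem_Wset_iff] at hx ⊢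
  obtain ⟨i, rfl⟩ := hx
  obtain ⟨k, hk⟩ := closure t ht Y hY i
  refine ⟨k, ?_⟩
  unfold bq
  rw [hk]
  push_cast; ring

end CoreAux

namespace CoreAux

lemma key_algebra (T Mq A R : ℚ) (hT : T ≠ 0) :
    (Mq + 1 + A) * ((T+1)/2 - 1 + T*A + R) - T*((Mq + 1 + A)*((Mq + 1 + A)-1))/2
      - ((T+1)/2 - 1 + T*A + R)^2/(2*T)
    = (-(T*Mq) + 3/4*T^2 - T/2 - T^2*Mq^2 - 1/4)/(2*T)
      + (T/2) * A + ((2*T*Mq+T+1)/(2*T)) * R + (-1/(2*T)) * R^2 := by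
  field_simp
  ring

end CoreAux
open Finset in
set_option maxHeartbeats 1000000 in
/-- size of a t-core in terms of its V-coding. -/
theorem stmt_3 (t : ℕ) (ht : 0 < t) (Y : YoungDiagram) (hY : Y.IsCore t)
    (v : Fin t → ℚ) (hv : StrictAnti v) (hrange : Set.range v = tMax t (Wset t Y)) :
    (Y.card : ℚ) = (∑ i, v i ^ 2) / (2 * t) - ((t : ℚ) ^ 2 - 1) / 24 := by
  classical
  have ht' : (t : ℚ) ≠ 0 := Nat.cast_ne_zero.mpr ht.ne'
  have htZ : (0:ℤ) < (t:ℤ) := by exact_mod_cast ht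
  set N := Y.colLen 0 with hN
  set M := N + t with hM
  set cq : ℚ := ((t : ℚ) + 1) / 2 with hcq
  have hbq : ∀ i, CoreAux.bq t Y i = ((CoreAux.bInt Y i : ℤ) : ℚ) + cq := fun i => rfl
  -- v is made of t-maximal elements
  have hvW : ∀ j, v j ∈ tMax t (Wset t Y) := fun j => hrange ▸ Set.mem_range_self j
  have hvW1 : ∀ j, v j ∈ Wset t Y := fun j => (hvW j).1
  have hvW2 : ∀ j, ∀ y ∈ Wset t Y, (∃ k : ℤ, y - v j = (k : ℚ) * t) → y ≤ v j :=
    fun j => (hvW j).2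
  have hidx : ∀ j, ∃ i, v j = CoreAux.bq t Y i :=
    fun j => (CoreAux.mem_Wset_iff t Y (v j)).mp (hvW1 j)
  choose idx hidx using hidx
  set n : Fin t → ℤ := fun j => CoreAux.bInt Y (idx j) + 1 with hn
  have hvn : ∀ j, v j = cq - 1 + (n j : ℚ) := by
    intro j
    rw [hidx j, hbq, hn]
    push_cast; ring
  set a : Fin t → ℤ := fun j => n j / t with ha
  set r : Fin t → ℤ := fun j => n j % t with hr
  have hnar : ∀ j, n j = t * a j + r j := fun j => (Int.mul_ediv_add_emod (n j) t).symm
  have hr0 : ∀ j, 0 ≤ r j := fun j => Int.emod_nonneg _ (by omega)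
  have hrt : ∀ j, r j < t := fun j => Int.emod_lt_of_pos _ htZ
  -- elements of distinct classes
  have hclasseq : ∀ j j' : Fin t, (∃ k : ℤ, v j - v j' = (k : ℚ) * t) → j = j' := by
    rintro j j' ⟨k, hk⟩
    have h1 : v j ≤ v j' := hvW2 j' (v j) (hvW1 j) ⟨k, hk⟩
    have h2 : v j' ≤ v j := hvW2 j (v j') (hvW1 j') ⟨-k, by push_cast; linarith⟩
    exact hv.injective (le_antisymm h1 h2)
  -- lower bound on the v's
  have hvC : ∀ j, cq - 1 - ((M*t : ℕ) : ℚ) ≤ v j := by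
    intro j
    set i : ℕ := N + ((-(N:ℤ) - n j) % t).toNat with hi
    have hrr0 : 0 ≤ (-(N:ℤ) - n j) % t := Int.emod_nonneg _ (by omega)
    have hrrt : (-(N:ℤ) - n j) % t < t := Int.emod_lt_of_pos _ htZ
    have hiN : N ≤ i := by omega
    have hiNt : i < N + t := by omega
    have hbi : CoreAux.bq t Y i = cq - 1 - i := CoreAux.bq_eq_of_le t Y i hiN
    have hdvd : (t:ℤ) ∣ (n j + i) := by
      have h1 := Int.mul_ediv_add_emod (-(N:ℤ) - n j) t
      refine ⟨-((-(N:ℤ) - n j) / t), ?_⟩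
      have h2 : ((i:ℕ) : ℤ) = (N : ℤ) + ((-(N:ℤ) - n j) % t) := by
        rw [hi]; push_cast [Int.toNat_of_nonneg hrr0]; ring
      rw [h2]; linarith
    obtain ⟨k, hk⟩ := hdvd
    have hle : CoreAux.bq t Y i ≤ v j := by
      apply hvW2 j _ ((CoreAux.mem_Wset_iff t Y _).mpr ⟨i, rfl⟩)
      refine ⟨-k, ?_⟩
      rw [hbi, hvn j]
      have : ((n j : ℚ) + (i:ℚ)) = (t:ℚ) * (k:ℚ) := by exact_mod_cast congrArg (Int.cast : ℤ → ℚ) hk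
      push_cast at this ⊢
      linarith
    have hit : (i:ℚ) ≤ ((M*t : ℕ) : ℚ) := by
      have h3 : i ≤ M * t := by
        have : M ≤ M * t := Nat.le_mul_of_pos_right M ht
        omega
      exact_mod_cast h3
    rw [hbi] at hle
    linarith
  -- lower bound on the a's
  have haM : ∀ j, -(M:ℤ) ≤ a j := by
    intro j
    have h1 := hvC j
    rw [hvn j] at h1
    have h2 : -((M*t : ℕ) : ℚ) ≤ (n j : ℚ) := by linarith
    have h3 : -((M:ℤ)*t) ≤ n j := by exact_mod_cast h2
    have h4 := hnar j
    have h5 := hr0 j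
    have h6 := hrt j
    by_contra hcon
    push_neg at hcon
    have h7 : a j ≤ -(M:ℤ) - 1 := by omega
    have h8 : (t:ℤ) * a j ≤ (t:ℤ) * (-(M:ℤ) - 1) := by
      exact mul_le_mul_of_nonneg_left h7 (by omega)
    nlinarith
  set K : Fin t → ℕ := fun j => ((M:ℤ) + 1 + a j).toNat with hKdef
  have hK : ∀ j, (K j : ℤ) = (M:ℤ) + 1 + a j := by
    intro j
    rw [hKdef]
    exact Int.toNat_of_nonneg (by have := haM j; omega)
  -- rays are inside W
  have hray : ∀ (j : Fin t) (k : ℕ), v j - (k:ℚ) * t ∈ Wset t Y := by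
    intro j k
    induction k with
    | zero => simpa using hvW1 j
    | succ k ih =>
        have h1 := CoreAux.Wset_sub_mem t ht Y hY _ ih
        have h2 : v j - ((k+1 : ℕ):ℚ) * t = (v j - (k:ℚ)*t) - t := by push_cast; ring
        rw [h2]; exact h1
  -- the two finsets
  set SL : Finset ℚ := (Finset.range (M*t+1)).image (CoreAux.bq t Y) with hSL
  set SR : Finset ℚ :=
    Finset.univ.biUnion (fun j : Fin t => (Finset.range (K j)).image (fun k : ℕ => v j - (k:ℚ) * t))
    with hSR
  have hNMt : N ≤ M * t := by
    have : M ≤ M * t := Nat.le_mul_of_pos_right M ht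
    omega
  have hSLchar : ∀ x, x ∈ SL ↔ (x ∈ Wset t Y ∧ cq - 1 - ((M*t:ℕ):ℚ) ≤ x) := by
    intro x
    rw [hSL, Finset.mem_image]
    constructor
    · rintro ⟨i, hi, rfl⟩
      rw [Finset.mem_range] at hi
      refine ⟨(CoreAux.mem_Wset_iff t Y _).mpr ⟨i, rfl⟩, ?_⟩
      have h1 := CoreAux.le_bq t Y i
      have h2 : (i:ℚ) ≤ ((M*t:ℕ):ℚ) := by exact_mod_cast Nat.lt_succ_iff.mp hi
      rw [← hcq] at h1
      linarith
    · rintro ⟨hxW, hxC⟩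
      obtain ⟨i, rfl⟩ := (CoreAux.mem_Wset_iff t Y _).mp hxW
      refine ⟨i, Finset.mem_range.mpr ?_, rfl⟩
      by_contra hcon
      push_neg at hcon
      have hiN : N ≤ i := by omega
      have h1 : CoreAux.bq t Y i = cq - 1 - i := CoreAux.bq_eq_of_le t Y i hiN
      have h2 : ((M*t:ℕ):ℚ) < (i:ℚ) := by exact_mod_cast (by omega : M*t < i)
      rw [h1] at hxC
      linarith
  have hSRchar : ∀ x, x ∈ SR ↔ (x ∈ Wset t Y ∧ cq - 1 - ((M*t:ℕ):ℚ) ≤ x) := by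
    intro x
    rw [hSR, Finset.mem_biUnion]
    constructor
    · rintro ⟨j, -, hx⟩
      rw [Finset.mem_image] at hx
      obtain ⟨k, hk, rfl⟩ := hx
      rw [Finset.mem_range] at hk
      refine ⟨hray j k, ?_⟩
      have h1 : (k:ℤ) ≤ (M:ℤ) + a j := by
        have := hK j; omega
      have h2 : (k:ℤ) * t ≤ ((M:ℤ) + a j) * t := mul_le_mul_of_nonneg_right h1 (by omega)
      have h3 : (a j) * t ≤ n j := by
        have h4 := hnar j
        have h5 := hr0 j
        nlinarith
      have h6 : (k:ℤ) * t ≤ (M:ℤ)*t + n j := by nlinarith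
      have h7 : ((k:ℚ)) * t ≤ ((M:ℚ))*t + (n j : ℚ) := by exact_mod_cast h6
      rw [hvn j]
      push_cast
      linarith
    · rintro ⟨hxW, hxC⟩
      obtain ⟨i, rfl⟩ := (CoreAux.mem_Wset_iff t Y _).mp hxW
      -- find the maximal element of the class of x
      set T : Finset ℕ := (Finset.range (i+1)).filter
        (fun i' => ∃ k : ℤ, CoreAux.bq t Y i' - CoreAux.bq t Y i = (k:ℚ) * t) with hT
      have hiT : i ∈ T := by
        rw [hT, Finset.mem_filter, Finset.mem_range]
        exact ⟨by omega, ⟨0, by push_cast; ring⟩⟩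
      have hTne : T.Nonempty := ⟨i, hiT⟩
      set i0 := T.min' hTne with hi0
      have hi0T : i0 ∈ T := T.min'_mem hTne
      rw [hT, Finset.mem_filter, Finset.mem_range] at hi0T
      obtain ⟨hi0lt, k0, hk0⟩ := hi0T
      have hmax : CoreAux.bq t Y i0 ∈ tMax t (Wset t Y) := by
        refine ⟨(CoreAux.mem_Wset_iff t Y _).mpr ⟨i0, rfl⟩, ?_⟩
        rintro y hy ⟨k, hk⟩
        obtain ⟨i', rfl⟩ := (CoreAux.mem_Wset_iff t Y _).mp hy
        by_contra hcon
        push_neg at hcon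
        have hi' : i' < i0 := by
          by_contra h'
          push_neg at h'
          exact absurd (CoreAux.bq_strictAnti t Y |>.antitone h') (not_le.mpr hcon)
        have hi'T : i' ∈ T := by
          rw [hT, Finset.mem_filter, Finset.mem_range]
          refine ⟨by omega, ⟨k + k0, ?_⟩⟩
          push_cast
          linarith
        have := T.min'_le i' hi'T
        omega
      rw [← hrange] at hmax
      obtain ⟨j, hj⟩ := hmax
      have hle : CoreAux.bq t Y i ≤ v j := by
        rw [hj]
        exact (CoreAux.bq_strictAnti t Y).antitone (Nat.lt_succ_iff.mp hi0lt)
      have hkey : v j - CoreAux.bq t Y i = (k0 : ℚ) * t := by rw [hj]; exact hk0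
      have hk00 : 0 ≤ k0 := by
        by_contra h'
        push_neg at h'
        have h1 : (k0:ℚ) * t < 0 := by
          apply mul_neg_of_neg_of_pos
          · exact_mod_cast h'
          · exact_mod_cast ht
        linarith
      have hk0K : k0 < (K j : ℤ) := by
        have h1 : cq - 1 - ((M*t:ℕ):ℚ) ≤ v j - (k0:ℚ)*t := by linarith [hkey, hxC]
        have h2 : -(((M:ℤ)*t : ℤ) : ℚ) ≤ (n j : ℚ) - (k0:ℚ)*t := by
          rw [hvn j] at h1
          push_cast at h1 ⊢
          linarith
        have h3 : -((M:ℤ)*t) ≤ n j - k0*t := by exact_mod_cast h2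
        have h4 := hnar j
        have h5 := hr0 j
        have h6 := hrt j
        rw [hK j]
        by_contra hcon
        push_neg at hcon
        have h8 : ((M:ℤ)+1+a j) * t ≤ k0 * t := mul_le_mul_of_nonneg_right hcon (by omega)
        nlinarith
      refine ⟨j, Finset.mem_univ j, ?_⟩
      rw [Finset.mem_image]
      refine ⟨k0.toNat, Finset.mem_range.mpr ?_, ?_⟩
      · omega
      · have hcast : ((k0.toNat : ℕ) : ℚ) = (k0 : ℚ) := by
          exact_mod_cast congrArg (Int.cast : ℤ → ℚ) (Int.toNat_of_nonneg hk00)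
        rw [hcast]
        linarith [hkey]
  have hSLSR : SL = SR := Finset.ext fun x => (hSLchar x).trans (hSRchar x).symm
  have hrayinj : ∀ j : Fin t, ∀ x ∈ Finset.range (K j), ∀ y ∈ Finset.range (K j),
      v j - (x:ℚ)*t = v j - (y:ℚ)*t → x = y := by
    intro j x _ y _ hxy
    have h1 : (x:ℚ)*t = (y:ℚ)*t := by linarith
    have h2 : (x:ℚ) = y := mul_right_cancel₀ ht' h1
    exact_mod_cast h2
  have hdisj : ∀ j ∈ (Finset.univ : Finset (Fin t)), ∀ j' ∈ Finset.univ, j ≠ j' →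
      Disjoint ((Finset.range (K j)).image (fun k : ℕ => v j - (k:ℚ)*t))
        ((Finset.range (K j')).image (fun k : ℕ => v j' - (k:ℚ)*t)) := by
    intro j _ j' _ hjj'
    rw [Finset.disjoint_left]
    rintro x hx hx'
    rw [Finset.mem_image] at hx hx'
    obtain ⟨k, -, rfl⟩ := hx
    obtain ⟨k', -, hk'⟩ := hx'
    refine hjj' (hclasseq j j' ⟨(k:ℤ) - (k':ℤ), ?_⟩)
    push_cast
    linarith [hk']
  have hbinj : ∀ x ∈ Finset.range (M*t+1), ∀ y ∈ Finset.range (M*t+1),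
      CoreAux.bq t Y x = CoreAux.bq t Y y → x = y :=
    fun x _ y _ h => (CoreAux.bq_strictAnti t Y).injective h
  have hcardL : SL.card = M*t+1 := by
    rw [hSL, Finset.card_image_of_injOn (fun x hx y hy h => hbinj x hx y hy h),
      Finset.card_range]
  have hcardR : SR.card = ∑ j, K j := by
    rw [hSR, Finset.card_biUnion hdisj]
    refine Finset.sum_congr rfl fun j _ => ?_
    rw [Finset.card_image_of_injOn (fun x hx y hy h => hrayinj j x hx y hy h),
      Finset.card_range]
  have hcards : M*t+1 = ∑ j, K j := by rw [← hcardL, hSLSR, hcardR]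
  have hsumA : ∑ j, a j = 1 - (t:ℤ) := by
    have h1 : ((M:ℤ)*t+1) = ∑ j, ((K j : ℕ) : ℤ) := by exact_mod_cast hcards
    rw [Finset.sum_congr rfl (fun j _ => hK j), Finset.sum_add_distrib,
      Finset.sum_const, Finset.card_univ, Fintype.card_fin, nsmul_eq_mul] at h1
    linarith
  have hpd : Set.PairwiseDisjoint (↑(Finset.univ : Finset (Fin t)))
      (fun j : Fin t => (Finset.range (K j)).image (fun k : ℕ => v j - (k:ℚ)*t)) :=
    fun j _ j' _ hne => hdisj j (Finset.mem_univ j) j' (Finset.mem_univ j') hne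
  have hsum1 : ∑ i ∈ Finset.range (M*t+1), CoreAux.bq t Y i
      = ∑ j, ∑ k ∈ Finset.range (K j), (v j - (k:ℚ)*t) := by
    have e1 : ∑ x ∈ SL, x = ∑ i ∈ Finset.range (M*t+1), CoreAux.bq t Y i :=
      Finset.sum_image hbinj
    have e2 : ∑ x ∈ SR, x = ∑ j, ∑ k ∈ Finset.range (K j), (v j - (k:ℚ)*t) := by
      rw [hSR, Finset.sum_biUnion hpd]
      exact Finset.sum_congr rfl fun j _ => Finset.sum_image (hrayinj j)
    rw [← e1, hSLSR, e2]
  have hinner : ∀ j, ∑ k ∈ Finset.range (K j), (v j - (k:ℚ)*t)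
      = (K j : ℚ) * v j - (t:ℚ) * ((K j:ℚ) * ((K j:ℚ) - 1)) / 2 := by
    intro j
    rw [Finset.sum_sub_distrib, Finset.sum_const, Finset.card_range, ← Finset.sum_mul,
      CoreAux.sum_range_cast, nsmul_eq_mul]
    ring
  have hNle : N ≤ M*t+1 := by omega
  have hYcard : (Y.card : ℚ) = (∑ i ∈ Finset.range (M*t+1), CoreAux.bq t Y i)
      - ∑ i ∈ Finset.range (M*t+1), (cq - 1 - (i:ℚ)) := by
    rw [CoreAux.card_eq_sum_rowLen Y (M*t+1) hNle, ← Finset.sum_sub_distrib]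
    push_cast
    refine Finset.sum_congr rfl fun i _ => ?_
    rw [hbq]
    unfold CoreAux.bInt
    push_cast
    ring
  have hE : ∑ i ∈ Finset.range (M*t+1), (cq - 1 - (i:ℚ))
      = ((M*t+1:ℕ):ℚ) * (cq - 1) - ((M*t+1:ℕ):ℚ) * (((M*t+1:ℕ):ℚ) - 1) / 2 := by
    rw [Finset.sum_sub_distrib, Finset.sum_const, Finset.card_range,
      CoreAux.sum_range_cast, nsmul_eq_mul]
  -- residues are a permutation of 0..t-1
  have hrrlt : ∀ j : Fin t, (r j).toNat < t := fun j => by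
    have := hr0 j; have := hrt j; omega
  set rr : Fin t → Fin t := fun j => ⟨(r j).toNat, hrrlt j⟩ with hrrdef
  have hrrinj : Function.Injective rr := by
    intro j j' h
    have h0 := hr0 j
    have h0' := hr0 j'
    have h1 : r j = r j' := by
      have h2 := congrArg (fun x : Fin t => ((x : ℕ) : ℤ)) h
      simp only [hrrdef] at h2
      omega
    refine hclasseq j j' ⟨a j - a j', ?_⟩
    rw [hvn j, hvn j']
    have h2 : n j - n j' = (a j - a j') * (t:ℤ) := by
      rw [hnar j, hnar j', h1]; ring
    have h3 : (n j:ℚ) - (n j':ℚ) = ((a j - a j' : ℤ):ℚ) * (t:ℚ) := by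
      exact_mod_cast congrArg (Int.cast : ℤ → ℚ) h2
    push_cast at h3 ⊢
    linarith
  have hbij : Function.Bijective rr := Finite.injective_iff_bijective.mp hrrinj
  set e : Fin t ≃ Fin t := Equiv.ofBijective rr hbij with hedef
  have hre : ∀ j, ((r j : ℤ):ℚ) = ((e j : ℕ):ℚ) := by
    intro j
    have : ((e j : ℕ) : ℤ) = r j := by
      simp only [hedef, Equiv.ofBijective_apply, hrrdef]
      exact Int.toNat_of_nonneg (hr0 j)
    exact_mod_cast this.symm
  have hsumR : ∑ j, ((r j : ℤ):ℚ) = (t:ℚ)*((t:ℚ)-1)/2 := by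
    calc ∑ j, ((r j:ℤ):ℚ) = ∑ j, ((e j : ℕ):ℚ) := Finset.sum_congr rfl (fun j _ => hre j)
      _ = ∑ x : Fin t, ((x:ℕ):ℚ) := e.sum_comp (fun x : Fin t => ((x:ℕ):ℚ))
      _ = ∑ i ∈ Finset.range t, (i:ℚ) := Fin.sum_univ_eq_sum_range _ t
      _ = _ := CoreAux.sum_range_cast t
  have hsumR2 : ∑ j, ((r j : ℤ):ℚ)^2 = (t:ℚ)*((t:ℚ)-1)*(2*(t:ℚ)-1)/6 := by
    calc ∑ j, ((r j:ℤ):ℚ)^2 = ∑ j, ((e j : ℕ):ℚ)^2 :=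
        Finset.sum_congr rfl (fun j _ => by rw [hre j])
      _ = ∑ x : Fin t, ((x:ℕ):ℚ)^2 := e.sum_comp (fun x : Fin t => ((x:ℕ):ℚ)^2)
      _ = ∑ i ∈ Finset.range t, (i:ℚ)^2 := Fin.sum_univ_eq_sum_range (fun i => (i:ℚ)^2) t
      _ = _ := CoreAux.sum_range_sq_cast t
  -- final algebra
  have hKq : ∀ j, ((K j : ℕ):ℚ) = (M:ℚ) + 1 + ((a j :ℤ):ℚ) := by
    intro j
    exact_mod_cast congrArg (Int.cast : ℤ → ℚ) (hK j)
  have hvq : ∀ j, v j = cq - 1 + (t:ℚ) * ((a j:ℤ):ℚ) + ((r j:ℤ):ℚ) := by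
    intro j
    rw [hvn j, hnar j]
    push_cast
    ring
  have key : ∀ j, (K j : ℚ) * v j - (t:ℚ)*((K j:ℚ)*((K j:ℚ)-1))/2 - (v j)^2/(2*(t:ℚ))
      = (-((t:ℚ)*(M:ℚ)) + 3/4*(t:ℚ)^2 - (t:ℚ)/2 - (t:ℚ)^2*(M:ℚ)^2 - 1/4)/(2*(t:ℚ))
        + ((t:ℚ)/2) * ((a j:ℤ):ℚ)
        + ((2*(t:ℚ)*(M:ℚ)+(t:ℚ)+1)/(2*(t:ℚ))) * ((r j:ℤ):ℚ)
        + (-1/(2*(t:ℚ))) * ((r j:ℤ):ℚ)^2 := by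
    intro j
    rw [hKq j, hvq j, hcq]
    exact CoreAux.key_algebra (t:ℚ) (M:ℚ) ((a j:ℤ):ℚ) ((r j:ℤ):ℚ) ht'
  have hsumAq : ∑ j, ((a j:ℤ):ℚ) = 1 - (t:ℚ) := by
    have h1 := congrArg (Int.cast : ℤ → ℚ) hsumA
    push_cast at h1
    exact h1
  have hsplit : ∑ j, ((K j:ℚ)*v j - (t:ℚ)*((K j:ℚ)*((K j:ℚ)-1))/2) - (∑ j, (v j)^2)/(2*(t:ℚ))
      = (t:ℚ) * ((-((t:ℚ)*(M:ℚ)) + 3/4*(t:ℚ)^2 - (t:ℚ)/2 - (t:ℚ)^2*(M:ℚ)^2 - 1/4)/(2*(t:ℚ)))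
        + ((t:ℚ)/2) * (1 - (t:ℚ))
        + ((2*(t:ℚ)*(M:ℚ)+(t:ℚ)+1)/(2*(t:ℚ))) * ((t:ℚ)*((t:ℚ)-1)/2)
        + (-1/(2*(t:ℚ))) * ((t:ℚ)*((t:ℚ)-1)*(2*(t:ℚ)-1)/6) := by
    rw [Finset.sum_div, ← Finset.sum_sub_distrib,
      Finset.sum_congr rfl (fun j _ => key j),
      Finset.sum_add_distrib, Finset.sum_add_distrib, Finset.sum_add_distrib,
      ← Finset.mul_sum, ← Finset.mul_sum, ← Finset.mul_sum,
      Finset.sum_const, Finset.card_univ, Fintype.card_fin,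
      hsumAq, hsumR, hsumR2, nsmul_eq_mul]
  have hMt1 : ((M*t+1:ℕ):ℚ) = (M:ℚ)*(t:ℚ)+1 := by push_cast; ring
  have hfin : (t:ℚ) * ((-((t:ℚ)*(M:ℚ)) + 3/4*(t:ℚ)^2 - (t:ℚ)/2 - (t:ℚ)^2*(M:ℚ)^2 - 1/4)/(2*(t:ℚ)))
        + ((t:ℚ)/2) * (1 - (t:ℚ))
        + ((2*(t:ℚ)*(M:ℚ)+(t:ℚ)+1)/(2*(t:ℚ))) * ((t:ℚ)*((t:ℚ)-1)/2)
        + (-1/(2*(t:ℚ))) * ((t:ℚ)*((t:ℚ)-1)*(2*(t:ℚ)-1)/6)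
      - (((M*t+1:ℕ):ℚ) * (cq - 1) - ((M*t+1:ℕ):ℚ) * (((M*t+1:ℕ):ℚ) - 1) / 2)
      = -(((t:ℚ)^2-1)/24) := by
    rw [hMt1, hcq]
    field_simp
    ring
  rw [hYcard, hsum1, Finset.sum_congr rfl (fun j _ => hinner j), hE]
  linarith [hsplit, hfin]
end
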